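/- Let N ≥ 1, p > 2, p′ = p/(p−1), and let a, b : ℝᴺ → ℝ be measurable functions with a(x) ≥ a₀ > 0 and 0 ≤ b(x) ≤ p − 1 for almost every x. For ū, v̄ ∈ L^{p′}(ℝᴺ), the function x ↦ h(x, ū(x), v̄(x)) is measurable, where h(x,·,·) denotes the Legendre transform of f(x,s,t) = (a(x)/p)(|s|^p + 2b(x)|s|^{p/2}|t|^{p/2} + |t|^p); moreover h(·, ū, v̄) is integrable on ℝᴺ. -/

import Mathlib

open MeasureTheory

/-- Sup over ℝ² of a continuous function equals sup over ℚ². -/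
lemma rat_sup_eq_aux {g : ℝ × ℝ → ℝ} (hg : Continuous g) :
    (⨆ st : ℝ × ℝ, g st) = ⨆ q : ℚ × ℚ, g ((q.1 : ℝ), (q.2 : ℝ)) := by
  have hdense : DenseRange (fun q : ℚ × ℚ => (((q.1 : ℝ), (q.2 : ℝ)) : ℝ × ℝ)) :=
    (Rat.denseRange_cast (𝕜 := ℝ)).prodMap (Rat.denseRange_cast (𝕜 := ℝ))
  by_cases hbdd : BddAbove (Set.range fun q : ℚ × ℚ => g ((q.1 : ℝ), (q.2 : ℝ)))
  · have key : ∀ st : ℝ × ℝ, g st ≤ ⨆ q : ℚ × ℚ, g ((q.1 : ℝ), (q.2 : ℝ)) := by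
      intro st
      set S := ⨆ q : ℚ × ℚ, g ((q.1 : ℝ), (q.2 : ℝ))
      have hclosed : IsClosed {x : ℝ × ℝ | g x ≤ S} := isClosed_le hg continuous_const
      have hsub : Set.range (fun q : ℚ × ℚ => (((q.1 : ℝ), (q.2 : ℝ)) : ℝ × ℝ)) ⊆
          {x : ℝ × ℝ | g x ≤ S} := by
        rintro - ⟨q, rfl⟩
        exact le_ciSup hbdd q
      have hst := (closure_mono hsub) (hdense st)
      rwa [hclosed.closure_eq] at hst
    refine le_antisymm (ciSup_le key) ?_
    refine ciSup_le fun q => ?_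
    exact le_ciSup ⟨_, Set.forall_mem_range.2 key⟩ ((q.1 : ℝ), (q.2 : ℝ))
  · rw [Real.iSup_of_not_bddAbove hbdd, Real.iSup_of_not_bddAbove]
    intro hb
    exact hbdd (hb.mono (Set.range_comp_subset_range _ g))

/-- Young-type bound: `s * sb ≤ (a₀/p)|s|^p + K |sb|^{p'}`. -/
lemma young_bound_aux {p p' a₀ : ℝ} (hpq : p.HolderConjugate p') (ha₀ : 0 < a₀) (s sb : ℝ) :
    s * sb ≤ a₀ / p * |s| ^ p + (a₀ ^ (-(1 / p))) ^ p' / p' * |sb| ^ p' := by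
  have hp0 : (0:ℝ) < p := hpq.pos
  have hc : (0:ℝ) < a₀ ^ (-(1/p)) := Real.rpow_pos_of_pos ha₀ _
  have hd : (0:ℝ) < a₀ ^ (1/p : ℝ) := Real.rpow_pos_of_pos ha₀ _
  have hdc : a₀ ^ (1/p : ℝ) * a₀ ^ (-(1/p)) = 1 := by
    rw [← Real.rpow_add ha₀]; simp
  have h1 : s * sb ≤ |s| * |sb| := by
    calc s * sb ≤ |s * sb| := le_abs_self _
    _ = |s| * |sb| := abs_mul _ _
  have h2 : (a₀ ^ (1/p : ℝ) * |s|) * (a₀ ^ (-(1/p)) * |sb|) = |s| * |sb| := by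
    calc (a₀ ^ (1/p : ℝ) * |s|) * (a₀ ^ (-(1/p)) * |sb|)
        = (a₀ ^ (1/p : ℝ) * a₀ ^ (-(1/p))) * (|s| * |sb|) := by ring
    _ = |s| * |sb| := by rw [hdc, one_mul]
  have h3 := Real.young_inequality (a₀ ^ (1/p : ℝ) * |s|) (a₀ ^ (-(1/p)) * |sb|) hpq
  rw [abs_of_nonneg (show (0:ℝ) ≤ a₀ ^ (1/p : ℝ) * |s| by positivity),
    abs_of_nonneg (show (0:ℝ) ≤ a₀ ^ (-(1/p)) * |sb| by positivity), h2] at h3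
  have e3 : (a₀ ^ (1/p : ℝ) * |s|) ^ p = a₀ * |s| ^ p := by
    rw [Real.mul_rpow hd.le (abs_nonneg _), ← Real.rpow_mul ha₀.le,
      one_div_mul_cancel hp0.ne', Real.rpow_one]
  have e4 : (a₀ ^ (-(1/p)) * |sb|) ^ p' = (a₀ ^ (-(1/p))) ^ p' * |sb| ^ p' :=
    Real.mul_rpow hc.le (abs_nonneg _)
  rw [e3, e4] at h3
  calc s * sb ≤ |s| * |sb| := h1
  _ ≤ a₀ * |s| ^ p / p + (a₀ ^ (-(1/p))) ^ p' * |sb| ^ p' / p' := h3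
  _ = a₀ / p * |s| ^ p + (a₀ ^ (-(1 / p))) ^ p' / p' * |sb| ^ p' := by ring

/-- for measurable `a, b : ℝᴺ → ℝ` with `a ≥ a₀ > 0` and `0 ≤ b ≤ p - 1` a.e.,
and `ū, v̄ ∈ L^(p')(ℝᴺ)`, the function `x ↦ h(x, ū(x), v̄(x))` is measurable and integrable,
where `h(x,·,·)` is the Legendre transform of
`f(x,s,t) = (a(x)/p)(|s|^p + 2b(x)|s|^(p/2)|t|^(p/2) + |t|^p)`. -/
theorem stmt_18 (N : ℕ) (hN : 1 ≤ N) (p p' a₀ : ℝ) (hp : 2 < p) (hp' : p' = p / (p - 1))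
    (ha₀ : 0 < a₀)
    (a b : (Fin N → ℝ) → ℝ) (hma : Measurable a) (hmb : Measurable b)
    (ha : ∀ᵐ x ∂(volume : Measure (Fin N → ℝ)), a₀ ≤ a x)
    (hb : ∀ᵐ x ∂(volume : Measure (Fin N → ℝ)), 0 ≤ b x ∧ b x ≤ p - 1)
    (u v : (Fin N → ℝ) → ℝ) (hmu : Measurable u) (hmv : Measurable v)
    (hu : MemLp u (ENNReal.ofReal p') (volume : Measure (Fin N → ℝ)))
    (hv : MemLp v (ENNReal.ofReal p') (volume : Measure (Fin N → ℝ)))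
    (h : (Fin N → ℝ) → ℝ → ℝ → ℝ)
    (hh : ∀ x sb tb, h x sb tb = ⨆ st : ℝ × ℝ,
      (st.1 * sb + st.2 * tb -
        (a x / p) * (|st.1| ^ p + 2 * b x * |st.1| ^ (p / 2) * |st.2| ^ (p / 2) + |st.2| ^ p))) :
    Measurable (fun x => h x (u x) (v x)) ∧
      Integrable (fun x => h x (u x) (v x)) (volume : Measure (Fin N → ℝ)) := by
  have hp1 : (1:ℝ) < p := by linarith
  have hp0 : (0:ℝ) < p := by linarith
  have conj : p.HolderConjugate p' := (Real.holderConjugate_iff_eq_conjExponent hp1).2 hp'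
  have hp'pos : (0:ℝ) < p' := conj.symm.pos
  set K : ℝ := (a₀ ^ (-(1 / p))) ^ p' / p' with hK
  -- continuity of the inner function
  have cp : Continuous fun r : ℝ => |r| ^ p :=
    (Real.continuous_rpow_const hp0.le).comp continuous_abs
  have cph : Continuous fun r : ℝ => |r| ^ (p / 2) :=
    (Real.continuous_rpow_const (by positivity)).comp continuous_abs
  have hcont : ∀ A B sb tb : ℝ, Continuous fun st : ℝ × ℝ =>
      st.1 * sb + st.2 * tb -
        (A / p) * (|st.1| ^ p + 2 * B * |st.1| ^ (p / 2) * |st.2| ^ (p / 2) + |st.2| ^ p) := by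
    intro A B sb tb
    exact ((continuous_fst.mul continuous_const).add (continuous_snd.mul continuous_const)).sub
      (continuous_const.mul
        (((cp.comp continuous_fst).add
          ((continuous_const.mul (cph.comp continuous_fst)).mul (cph.comp continuous_snd))).add
          (cp.comp continuous_snd)))
  -- measurability via rational sup
  have hrepr : (fun x => h x (u x) (v x)) = fun x => ⨆ q : ℚ × ℚ,
      ((q.1 : ℝ) * u x + (q.2 : ℝ) * v x -
        (a x / p) * (|(q.1 : ℝ)| ^ p + 2 * b x * |(q.1 : ℝ)| ^ (p / 2) * |(q.2 : ℝ)| ^ (p / 2) +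
          |(q.2 : ℝ)| ^ p)) := by
    funext x
    rw [hh]
    exact rat_sup_eq_aux (hcont (a x) (b x) (u x) (v x))
  have meas : Measurable (fun x => h x (u x) (v x)) := by
    rw [hrepr]
    refine Measurable.iSup fun q => ?_
    exact ((hmu.const_mul _).add (hmv.const_mul _)).sub
      ((hma.div_const p).mul
        ((measurable_const.add (((hmb.const_mul 2).mul_const _).mul_const _)).add
          measurable_const))
  refine ⟨meas, ?_⟩
  -- integrable dominating function
  have hint : Integrable (fun x => K * (|u x| ^ p' + |v x| ^ p')) volume := by
    have hne0 : ENNReal.ofReal p' ≠ 0 := (ENNReal.ofReal_pos.2 hp'pos).ne'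
    have h1 := hu.integrable_norm_rpow hne0 ENNReal.ofReal_ne_top
    have h2 := hv.integrable_norm_rpow hne0 ENNReal.ofReal_ne_top
    rw [ENNReal.toReal_ofReal hp'pos.le] at h1 h2
    simp only [Real.norm_eq_abs] at h1 h2
    exact (h1.add h2).const_mul K
  refine Integrable.mono' hint meas.aestronglyMeasurable ?_
  filter_upwards [ha, hb] with x hax hbx
  -- pointwise bound on the supremand
  have hFle : ∀ st : ℝ × ℝ,
      st.1 * u x + st.2 * v x -
        (a x / p) * (|st.1| ^ p + 2 * b x * |st.1| ^ (p / 2) * |st.2| ^ (p / 2) + |st.2| ^ p)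
      ≤ K * (|u x| ^ p' + |v x| ^ p') := by
    intro st
    have hmid : 0 ≤ 2 * b x * |st.1| ^ (p / 2) * |st.2| ^ (p / 2) :=
      mul_nonneg (mul_nonneg (mul_nonneg (by norm_num) hbx.1)
        (Real.rpow_nonneg (abs_nonneg _) _)) (Real.rpow_nonneg (abs_nonneg _) _)
    have hApos : (0:ℝ) ≤ |st.1| ^ p + |st.2| ^ p :=
      add_nonneg (Real.rpow_nonneg (abs_nonneg _) _) (Real.rpow_nonneg (abs_nonneg _) _)
    have hcoef : a₀ / p ≤ a x / p := by gcongr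
    have hmul : (a₀ / p) * (|st.1| ^ p + |st.2| ^ p) ≤
        (a x / p) * (|st.1| ^ p + 2 * b x * |st.1| ^ (p / 2) * |st.2| ^ (p / 2) + |st.2| ^ p) :=
      mul_le_mul hcoef (by linarith) hApos (div_nonneg (ha₀.le.trans hax) hp0.le)
    have hy1 := young_bound_aux conj ha₀ st.1 (u x)
    have hy2 := young_bound_aux conj ha₀ st.2 (v x)
    have : st.1 * u x + st.2 * v x -
        (a x / p) * (|st.1| ^ p + 2 * b x * |st.1| ^ (p / 2) * |st.2| ^ (p / 2) + |st.2| ^ p)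
        ≤ st.1 * u x + st.2 * v x - (a₀ / p) * (|st.1| ^ p + |st.2| ^ p) := by linarith
    calc st.1 * u x + st.2 * v x -
        (a x / p) * (|st.1| ^ p + 2 * b x * |st.1| ^ (p / 2) * |st.2| ^ (p / 2) + |st.2| ^ p)
        ≤ st.1 * u x + st.2 * v x - (a₀ / p) * (|st.1| ^ p + |st.2| ^ p) := this
    _ ≤ K * (|u x| ^ p' + |v x| ^ p') := by rw [hK]; nlinarith [hy1, hy2]
  have hbdd : BddAbove (Set.range fun st : ℝ × ℝ =>
      st.1 * u x + st.2 * v x -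
        (a x / p) * (|st.1| ^ p + 2 * b x * |st.1| ^ (p / 2) * |st.2| ^ (p / 2) + |st.2| ^ p)) :=
    ⟨_, Set.forall_mem_range.2 hFle⟩
  have h0 : (0:ℝ) ≤ h x (u x) (v x) := by
    rw [hh]
    have hval := le_ciSup hbdd ((0:ℝ), (0:ℝ))
    simpa [Real.zero_rpow hp0.ne', Real.zero_rpow (show p / 2 ≠ 0 by positivity)] using hval
  have hle : h x (u x) (v x) ≤ K * (|u x| ^ p' + |v x| ^ p') := by
    rw [hh]; exact ciSup_le hFle
  rw [Real.norm_eq_abs, abs_of_nonneg h0]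
  exact hle
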